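/- Let p ≥ 2 be a real number and u ≥ 1 a natural number. Let B be the space of u-tuples of complex numbers (z_0, …, z_{u−1}), regarded as a real normed space with norm ‖z‖ = (∑_{j<u} |z_j|^p)^{1/p}. Define T : B → B by (T z)_j = e^{iπ/2^j} · z_j for j = 0, …, u−1, and let x = u^{−1/p} · (1, 1, …, 1). Then: (a) T is a linear isometry of B; (b) ‖x‖ = 1; and (c) for every j with 0 ≤ j < u, ‖A_{2^{j+1}} x − A_{2^j} x‖ ≥ 1/(2 u^{1/p}). In particular, the sequence (A_n x) admits a (1/(2u^{1/p}))-fluctuation in each of the intervals [1,2], [2,4], …, [2^{u−1}, 2^u], hence u-many such fluctuations in all. -/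

import Mathlib

open Finset

/-- The operator `T = (T_π, T_{π/2}, …, T_{π/2^{u-1}})`: component `j` is multiplication by
`e^{iπ/2^j}`. -/
noncomputable def rotOp (u : ℕ) (z : Fin u → ℂ) : Fin u → ℂ :=
  fun j => Complex.exp ((Real.pi : ℂ) * Complex.I / 2 ^ (j : ℕ)) * z j

/-- The ergodic averages `A n z = (1/n) ∑_{i<n} Tⁱ z` for the operator `rotOp u`. -/
noncomputable def rotOpAvg (u n : ℕ) (z : Fin u → ℂ) : Fin u → ℂ :=
  (n : ℝ)⁻¹ • ∑ i ∈ Finset.range n, (rotOp u)^[i] z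

/-- The `ℓ^p` norm on `u`-tuples of complex numbers, viewed as a real normed space. -/
noncomputable def lpNormC (p : ℝ) (u : ℕ) (z : Fin u → ℂ) : ℝ :=
  (∑ j : Fin u, ‖z j‖ ^ p) ^ (1 / p)

/-- The point `x = u^{-1/p}·(1, 1, …, 1)`. -/
noncomputable def onesVec (p : ℝ) (u : ℕ) : Fin u → ℂ :=
  fun _ => (((u : ℝ) ^ (-(1 / p)) : ℝ) : ℂ)

lemma my_abs_exp_I_sub_one_le {θ : ℝ} (h0 : 0 ≤ θ) :
    ‖Complex.exp ((θ : ℂ) * Complex.I) - 1‖ ≤ θ := by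
  have hsq : ‖Complex.exp ((θ : ℂ) * Complex.I) - 1‖ ^ 2 = 2 - 2 * Real.cos θ := by
    rw [Complex.sq_norm, Complex.normSq_apply]
    simp only [Complex.sub_re, Complex.sub_im, Complex.exp_ofReal_mul_I_re,
      Complex.exp_ofReal_mul_I_im, Complex.one_re, Complex.one_im]
    nlinarith [Real.sin_sq_add_cos_sq θ]
  have hb : ‖Complex.exp ((θ : ℂ) * Complex.I) - 1‖ ^ 2 ≤ θ ^ 2 := by
    rw [hsq]; nlinarith [Real.one_sub_sq_div_two_le_cos (x := θ)]
  exact le_of_pow_le_pow_left₀ two_ne_zero h0 hb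

lemma rotOp_iterate (u i : ℕ) (z : Fin u → ℂ) (j : Fin u) :
    (rotOp u)^[i] z j = Complex.exp ((Real.pi : ℂ) * Complex.I / 2 ^ (j : ℕ)) ^ i * z j := by
  induction i generalizing z with
  | zero => simp
  | succ n ih =>
    rw [Function.iterate_succ_apply', rotOp, ih, pow_succ]
    ring

lemma lpNormC_lower (p : ℝ) (hp : 0 < p) (u : ℕ) (z : Fin u → ℂ) (j : Fin u) :
    ‖z j‖ ≤ lpNormC p u z := by
  have h1 : ‖z j‖ ^ p ≤ ∑ i : Fin u, ‖z i‖ ^ p :=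
    Finset.single_le_sum (fun i _ => Real.rpow_nonneg (norm_nonneg _) p) (mem_univ j)
  have h2 := Real.rpow_le_rpow (Real.rpow_nonneg (norm_nonneg _) p) h1
    (by positivity : (0:ℝ) ≤ 1 / p)
  calc ‖z j‖ = (‖z j‖ ^ p) ^ (1 / p) := by
        rw [← Real.rpow_mul (norm_nonneg _), mul_one_div, div_self hp.ne', Real.rpow_one]
    _ ≤ lpNormC p u z := h2


/-- Lower bound construction: on `ℓ^p_u(ℂ)` (as a real normed space), the operator `rotOp u` is
a linear isometry, `‖x‖ = 1` for `x = u^{-1/p}·(1,…,1)`, and for each `j < u`,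
`‖A_{2^{j+1}} x − A_{2^j} x‖ ≥ 1/(2 u^{1/p})`; that is, `(A_n x)` has a `1/(2u^{1/p})`-fluctuation
in each interval `[2^j, 2^{j+1}]`, `j = 0, …, u-1`, hence `u`-many such fluctuations in all. -/
theorem stmt17 (p : ℝ) (hp : 2 ≤ p) (u : ℕ) (hu : 1 ≤ u) :
    (∀ (c : ℝ) (z w : Fin u → ℂ), rotOp u (c • z + w) = c • rotOp u z + rotOp u w) ∧
    (∀ z : Fin u → ℂ, lpNormC p u (rotOp u z) = lpNormC p u z) ∧
    lpNormC p u (onesVec p u) = 1 ∧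
    (∀ j : ℕ, j < u →
      1 / (2 * (u : ℝ) ^ (1 / p)) ≤
        lpNormC p u (rotOpAvg u (2 ^ (j + 1)) (onesVec p u) - rotOpAvg u (2 ^ j) (onesVec p u))) := by
  have hp0 : (0:ℝ) < p := by linarith
  have hu0 : (0:ℝ) < (u:ℝ) := by exact_mod_cast hu
  refine ⟨?_, ?_, ?_, ?_⟩
  · intro c z w
    funext j
    simp only [rotOp, Pi.add_apply, Pi.smul_apply, Complex.real_smul]
    ring
  · intro z
    unfold lpNormC rotOp
    congr 1
    refine Finset.sum_congr rfl fun j _ => ?_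
    have hrw : (Real.pi : ℂ) * Complex.I / 2 ^ (j : ℕ)
        = ((Real.pi / 2 ^ (j : ℕ) : ℝ) : ℂ) * Complex.I := by push_cast; ring
    rw [norm_mul, hrw, Complex.norm_exp_ofReal_mul_I, one_mul]
  · unfold lpNormC onesVec
    have hc0 : (0:ℝ) ≤ (u : ℝ) ^ (-(1 / p)) := Real.rpow_nonneg hu0.le _
    have h1 : ‖(((((u : ℝ) ^ (-(1 / p)) : ℝ)) : ℂ))‖ = (u : ℝ) ^ (-(1 / p)) := by
      rw [Complex.norm_of_nonneg hc0]
    rw [Finset.sum_congr rfl (fun j _ => by rw [h1])]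
    rw [Finset.sum_const, Finset.card_univ, Fintype.card_fin, nsmul_eq_mul]
    rw [← Real.rpow_mul hu0.le]
    have he : -(1 / p) * p = -1 := by field_simp
    rw [he, Real.rpow_neg_one, mul_inv_cancel₀ hu0.ne', Real.one_rpow]
  · intro j hj
    set c : ℝ := (u : ℝ) ^ (-(1 / p)) with hc
    have hc0 : 0 < c := Real.rpow_pos_of_pos hu0 _
    set θ : ℝ := Real.pi / 2 ^ j with hθ
    have hθ0 : 0 < θ := by positivity
    set lam : ℂ := Complex.exp ((Real.pi : ℂ) * Complex.I / 2 ^ j) with hlam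
    have hrw : (Real.pi : ℂ) * Complex.I / 2 ^ j = ((θ : ℝ) : ℂ) * Complex.I := by
      rw [hθ]; push_cast; ring
    have h2j : ((2:ℂ) ^ j) ≠ 0 := pow_ne_zero j two_ne_zero
    have hpow1 : lam ^ (2 ^ j) = -1 := by
      rw [hlam, ← Complex.exp_nat_mul]
      have : ((2:ℂ) ^ j : ℂ) * ((Real.pi : ℂ) * Complex.I / 2 ^ j) = (Real.pi : ℂ) * Complex.I := by
        field_simp
      rw [show ((2 ^ j : ℕ) : ℂ) = (2:ℂ) ^ j by push_cast; ring, this, Complex.exp_pi_mul_I]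
    have hpow2 : lam ^ (2 ^ (j + 1)) = 1 := by
      have : (2:ℕ) ^ (j + 1) = 2 ^ j * 2 := by ring
      rw [this, pow_mul, hpow1]
      norm_num
    have hne : lam ≠ 1 := by
      intro h
      rw [h, one_pow] at hpow1
      norm_num at hpow1
    have hd0 : 0 < ‖lam - 1‖ :=
      norm_pos_iff.mpr (sub_ne_zero.mpr hne)
    have hdle : ‖lam - 1‖ ≤ θ := by
      rw [hlam, hrw]
      exact my_abs_exp_I_sub_one_le hθ0.le
    -- geometric sums
    have hs1 : ∑ i ∈ Finset.range (2 ^ (j + 1)), lam ^ i = 0 := by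
      rw [geom_sum_eq hne, hpow2]
      simp
    have hs2 : ∑ i ∈ Finset.range (2 ^ j), lam ^ i = -2 / (lam - 1) := by
      rw [geom_sum_eq hne, hpow1]
      ring
    set jf : Fin u := ⟨j, hj⟩ with hjf
    have hjval : ((jf : Fin u) : ℕ) = j := rfl
    have havg : ∀ n : ℕ, rotOpAvg u n (onesVec p u) jf
        = ((n : ℝ))⁻¹ • ((∑ i ∈ Finset.range n, lam ^ i) * (c : ℂ)) := by
      intro n
      rw [rotOpAvg, Pi.smul_apply, Finset.sum_apply]
      congr 1
      rw [Finset.sum_mul]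
      refine Finset.sum_congr rfl fun i _ => ?_
      rw [rotOp_iterate, hjval, onesVec]
    have hwj : (rotOpAvg u (2 ^ (j + 1)) (onesVec p u) - rotOpAvg u (2 ^ j) (onesVec p u)) jf
        = -((((2:ℝ) ^ j))⁻¹ • ((-2 / (lam - 1)) * (c : ℂ))) := by
      rw [Pi.sub_apply, havg, havg, hs1, hs2]
      push_cast
      simp
    have habs : ‖(rotOpAvg u (2 ^ (j + 1)) (onesVec p u)
        - rotOpAvg u (2 ^ j) (onesVec p u)) jf‖
        = ((2:ℝ) ^ j)⁻¹ * (2 / ‖lam - 1‖) * c := by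
      rw [hwj, norm_neg, Complex.real_smul, norm_mul, norm_mul, norm_div,
        Complex.norm_of_nonneg (by positivity : (0:ℝ) ≤ ((2:ℝ)^j)⁻¹), Complex.norm_of_nonneg hc0.le,
        show ‖(-2 : ℂ)‖ = 2 from by simp]
      ring
    have hdt : ‖lam - 1‖ * 2 ^ j ≤ Real.pi := by
      have := mul_le_mul_of_nonneg_right hdle (by positivity : (0:ℝ) ≤ 2 ^ j)
      rwa [hθ, div_mul_cancel₀ _ (by positivity : ((2:ℝ) ^ j) ≠ 0)] at this
    have hkey : 1 / 2 ≤ ((2:ℝ) ^ j)⁻¹ * (2 / ‖lam - 1‖) := by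
      have heq : ((2:ℝ) ^ j)⁻¹ * (2 / ‖lam - 1‖)
          = 2 / (‖lam - 1‖ * 2 ^ j) := by
        field_simp
      rw [heq]
      have h4 : ‖lam - 1‖ * 2 ^ j ≤ 4 := le_trans hdt (by linarith [Real.pi_le_four])
      calc (1:ℝ) / 2 = 2 / 4 := by norm_num
        _ ≤ 2 / (‖lam - 1‖ * 2 ^ j) :=
            div_le_div_of_nonneg_left (by norm_num) (by positivity) h4
    have hcinv : 1 / (2 * (u : ℝ) ^ (1 / p)) = c / 2 := by
      rw [hc, Real.rpow_neg hu0.le]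
      field_simp
    rw [hcinv]
    calc c / 2 = (1 / 2) * c := by ring
      _ ≤ ((2:ℝ) ^ j)⁻¹ * (2 / ‖lam - 1‖) * c :=
          mul_le_mul_of_nonneg_right hkey hc0.le
      _ = ‖(rotOpAvg u (2 ^ (j + 1)) (onesVec p u)
            - rotOpAvg u (2 ^ j) (onesVec p u)) jf‖ := habs.symm
      _ ≤ _ := lpNormC_lower p hp0 u _ jf
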